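/- For every real κ̃ ≥ 1 and every λ ∈ (0, 1) with λ ≠ 1/(2κ̃) and λ ≠ 1/κ̃, the function λ ↦ √(1 − f(λ)² − g(λ)²) is differentiable at λ and the absolute value of its derivative is at most κ̃ / (2√3). -/

import Mathlib

/-- The filter function `f`: `f(λ) = 1/(2κ̃λ)` for `λ ≥ 1/κ̃`,
`f(λ) = -(1/2)cos(πκ̃λ)` for `1/(2κ̃) ≤ λ ≤ 1/κ̃`, and `f(λ) = 0` for `λ ≤ 1/(2κ̃)`. -/
noncomputable def ff (κ lam : ℝ) : ℝ :=
  if 1 / κ ≤ lam then 1 / (2 * κ * lam)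
  else if 1 / (2 * κ) ≤ lam then -(1 / 2) * Real.cos (Real.pi * κ * lam)
  else 0

/-- The filter function `g`: `g(λ) = 0` for `λ ≥ 1/κ̃`,
`g(λ) = (1/2)sin(πκ̃λ)` for `1/(2κ̃) ≤ λ ≤ 1/κ̃`, and `g(λ) = 1/2` for `λ ≤ 1/(2κ̃)`. -/
noncomputable def gg (κ lam : ℝ) : ℝ :=
  if 1 / κ ≤ lam then 0
  else if 1 / (2 * κ) ≤ lam then (1 / 2) * Real.sin (Real.pi * κ * lam)
  else 1 / 2

theorem stmt_11 (κ : ℝ) (hκ : 1 ≤ κ) (lam : ℝ) (hlam : lam ∈ Set.Ioo (0 : ℝ) 1)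
    (h1 : lam ≠ 1 / (2 * κ)) (h2 : lam ≠ 1 / κ) :
    DifferentiableAt ℝ (fun l : ℝ => Real.sqrt (1 - ff κ l ^ 2 - gg κ l ^ 2)) lam ∧
      |deriv (fun l : ℝ => Real.sqrt (1 - ff κ l ^ 2 - gg κ l ^ 2)) lam| ≤
        κ / (2 * Real.sqrt 3) := by
  obtain ⟨hl0, hl1⟩ := hlam
  have hκ0 : (0:ℝ) < κ := lt_of_lt_of_le one_pos hκ
  have hs3 : (0:ℝ) < Real.sqrt 3 := Real.sqrt_pos.2 (by norm_num)
  have hhalf : 1/(2*κ) ≤ 1/κ := by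
    apply one_div_le_one_div_of_le hκ0; linarith
  have hpos : (0:ℝ) ≤ κ / (2 * Real.sqrt 3) := by positivity
  rcases lt_trichotomy lam (1/(2*κ)) with hA | hA | hA
  · have hev : (fun l : ℝ => Real.sqrt (1 - ff κ l ^ 2 - gg κ l ^ 2)) =ᶠ[nhds lam]
        fun _ => Real.sqrt (3/4) := by
      filter_upwards [Iio_mem_nhds hA] with l hl
      have ha : ¬ (1/κ ≤ l) := not_le.2 (lt_of_lt_of_le hl hhalf)
      have hb : ¬ (1/(2*κ) ≤ l) := not_le.2 hl
      simp only [ff, gg, ha, hb, if_false]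
      norm_num
    refine ⟨(hev.differentiableAt_iff).2 (differentiableAt_const _), ?_⟩
    rw [hev.deriv_eq, deriv_const]
    simpa using hpos
  · exact absurd hA h1
  rcases lt_trichotomy lam (1/κ) with hB | hB | hB
  · have hev : (fun l : ℝ => Real.sqrt (1 - ff κ l ^ 2 - gg κ l ^ 2)) =ᶠ[nhds lam]
        fun _ => Real.sqrt (3/4) := by
      filter_upwards [Ioo_mem_nhds hA hB] with l hl
      have ha : ¬ (1/κ ≤ l) := not_le.2 hl.2
      have hb : (1/(2*κ) ≤ l) := le_of_lt hl.1
      simp only [ff, gg, ha, hb, if_false, if_true]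
      congr 1
      nlinarith [Real.sin_sq_add_cos_sq (Real.pi * κ * l)]
    refine ⟨(hev.differentiableAt_iff).2 (differentiableAt_const _), ?_⟩
    rw [hev.deriv_eq, deriv_const]
    simpa using hpos
  · exact absurd hB h2
  · -- outer piece: lam > 1/κ
    have hkl : 1 < lam * κ := (div_lt_iff₀ hκ0).1 hB
    have hlne : lam ≠ 0 := ne_of_gt hl0
    have hu : HasDerivAt (fun l : ℝ => 1 - 1/(4*κ^2) * (l⁻¹)^2)
        (1/(2*κ^2*lam^3)) lam := by
      have h : HasDerivAt (fun l : ℝ => 1 - 1/(4*κ^2) * (l⁻¹)^2) _ lam := (((hasDerivAt_inv hlne).pow 2).const_mul (1/(4*κ^2))).const_sub 1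
      convert h using 1
      norm_num
      field_simp
      ring
    have hinv : (lam⁻¹)^2 < κ^2 := by
      have h1 : lam⁻¹ < κ := by
        rw [inv_lt_comm₀ hl0 hκ0]
        exact (one_div κ) ▸ hB
      have h2 : (0:ℝ) < lam⁻¹ := by positivity
      nlinarith
    have hulam : (3:ℝ)/4 ≤ 1 - 1/(4*κ^2) * (lam⁻¹)^2 := by
      have h14 : 1/(4*κ^2) * (lam⁻¹)^2 ≤ 1/4 := by
        rw [div_mul_eq_mul_div, one_mul, div_le_div_iff₀ (by positivity) (by norm_num)]
        nlinarith
      linarith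
    have hune : 1 - 1/(4*κ^2) * (lam⁻¹)^2 ≠ 0 := by linarith
    have hS := hu.sqrt hune
    have hev : (fun l : ℝ => Real.sqrt (1 - ff κ l ^ 2 - gg κ l ^ 2)) =ᶠ[nhds lam]
        fun l => Real.sqrt (1 - 1/(4*κ^2) * (l⁻¹)^2) := by
      filter_upwards [Ioi_mem_nhds hB] with l hl
      have hlpos : (0:ℝ) < l := lt_trans (by positivity) hl
      have ha : (1/κ ≤ l) := le_of_lt hl
      simp only [ff, gg, ha, if_true]
      congr 1
      field_simp
      ring
    refine ⟨(hev.differentiableAt_iff).2 hS.differentiableAt, ?_⟩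
    rw [hev.deriv_eq, hS.deriv]
    have hd0 : (0:ℝ) < 1/(2*κ^2*lam^3) := by positivity
    have hupos : (0:ℝ) < 1 - 1/(4*κ^2) * (lam⁻¹)^2 := by linarith
    have hsqrt34 : Real.sqrt (3/4) = Real.sqrt 3 / 2 := by
      rw [show (3:ℝ)/4 = (Real.sqrt 3 / 2)^2 by
            rw [div_pow, Real.sq_sqrt (by norm_num : (0:ℝ) ≤ 3)]; norm_num,
          Real.sqrt_sq (by positivity)]
    have hsq : Real.sqrt 3 / 2 ≤ Real.sqrt (1 - 1/(4*κ^2) * (lam⁻¹)^2) := by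
      calc Real.sqrt 3 / 2 = Real.sqrt (3/4) := hsqrt34.symm
        _ ≤ _ := Real.sqrt_le_sqrt hulam
    have hnum : 1/(2*κ^2*lam^3) ≤ κ/2 := by
      rw [div_le_div_iff₀ (by positivity) (by norm_num)]
      nlinarith [pow_le_pow_left₀ (by norm_num : (0:ℝ) ≤ 1) hkl.le 3, sq_nonneg (lam*κ)]
    have hden : Real.sqrt 3 ≤ 2 * Real.sqrt (1 - 1/(4*κ^2) * (lam⁻¹)^2) := by linarith
    rw [abs_of_nonneg (by positivity)]
    calc 1/(2*κ^2*lam^3) / (2 * Real.sqrt (1 - 1/(4*κ^2) * (lam⁻¹)^2))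
        ≤ (κ/2) / Real.sqrt 3 := div_le_div₀ (by positivity) hnum hs3 hden
      _ = κ / (2 * Real.sqrt 3) := by rw [div_div]
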